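/- Let G = (A, φ, w) be a D0L-system with non-erasing morphism φ and H = (A, φ, w, Ψ) an HD0L-system over it. If L_G is uniformly recurrent, then L_H contains at most one infinite repetition up to conjugation: if u and v are primitive words with u^k ∈ L_H and v^k ∈ L_H for all k ∈ ℕ, then v is a conjugate of u (i.e., u = xy and v = yx for some words x, y). -/

import Mathlib

/-- The extension of the morphism given by `φ` on letters to a morphism on words. -/
def extM {A B : Type*} (φ : A → List B) (w : List A) : List B := w.flatMap φ

/-- The `k`-th power `u^k` of a word `u`. -/
def wpow {A : Type*} (u : List A) (k : ℕ) : List A := (List.replicate k u).flatten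

/-- A word `v` is primitive if `v = u^k` implies `k = 1`. -/
def Primitive {A : Type*} (v : List A) : Prop :=
  v ≠ [] ∧ ∀ (u : List A) (k : ℕ), v = wpow u k → k = 1

/-- The language of the D0L-system `(A, φ, w)`: all factors of the words `φ^n(w)`. -/
def LangD0L {A : Type*} (φ : A → List A) (w : List A) : Set (List A) :=
  {v | ∃ n : ℕ, v <:+: (extM φ)^[n] w}

/-- `fact(Ψ(L))`: all factors of `Ψ`-images of elements of `L`. -/
def factImg {A B : Type*} (Ψ : A → List B) (L : Set (List A)) : Set (List B) :=
  {v | ∃ u ∈ L, v <:+: extM Ψ u}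

/-- The language of the HD0L-system `(A, φ, w, Ψ)`. -/
def LangHD0L {A B : Type*} (φ : A → List A) (w : List A) (Ψ : A → List B) : Set (List B) :=
  factImg Ψ (LangD0L φ w)

/-- A morphism is non-erasing if no letter is mapped to the empty word. -/
def NonErasing {A B : Type*} (φ : A → List B) : Prop := ∀ a, φ a ≠ []

/-- A letter `b` is bounded (w.r.t. `φ`) if the lengths `|φ^n(b)|` are bounded. -/
def BddLetter {A : Type*} (φ : A → List A) (b : A) : Prop :=
  ∃ C : ℕ, ∀ n : ℕ, ((extM φ)^[n] [b]).length ≤ C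

/-- The set of letters occurring in a word. -/
def alph {A : Type*} (u : List A) : Set A := {a | a ∈ u}

/-- `alph(φ(S))` for a set of letters `S`: letters occurring in `φ(b)` for some `b ∈ S`. -/
def alphIm {A : Type*} (φ : A → List A) (S : Set A) : Set A := ⋃ b ∈ S, alph (φ b)

/-- A D0L-system is pushy if its language contains infinitely many words over bounded letters. -/
def Pushy {A : Type*} (φ : A → List A) (w : List A) : Prop :=
  {v ∈ LangD0L φ w | ∀ a ∈ v, BddLetter φ a}.Infinite

/-- A factorial language `L` is uniformly recurrent: for every `n` there is `K` such that
every element of `L` of length `K` contains every element of `L` of length `n` as a factor. -/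
def UnifRec {A : Type*} (L : Set (List A)) : Prop :=
  ∀ n : ℕ, ∃ K : ℕ, ∀ u ∈ L, u.length = K → ∀ v ∈ L, v.length = n → v <:+: u

/-- Vertices of the tree of invariant subalphabets of `φ`: nonempty sets `S` with
`alph(φ(S)) = S` containing an unbounded letter `a` with `alph(φ(a)) = S`. -/
def IsVertex {A : Type*} (φ : A → List A) (S : Set A) : Prop :=
  S.Nonempty ∧ alphIm φ S = S ∧ ∃ a ∈ S, ¬ BddLetter φ a ∧ alph (φ a) = S

/-- Leaves of the tree of invariant subalphabets: minimal vertices w.r.t. inclusion. -/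
def IsLeaf {A : Type*} (φ : A → List A) (S : Set A) : Prop :=
  IsVertex φ S ∧ ∀ T, IsVertex φ T → T ⊆ S → T = S

/-- Two words are conjugate: `u = xy` and `v = yx`. -/
def Conj {A : Type*} (u v : List A) : Prop := ∃ x y : List A, u = x ++ y ∧ v = y ++ x

/-- The prefix of length `n` of an infinite word. -/
def prefW {A : Type*} (w : ℕ → A) (n : ℕ) : List A := (List.range n).map w

namespace Stmt2Aux

variable {A B : Type*}

lemma wpow_zero (z : List B) : wpow z 0 = [] := rfl

lemma wpow_succ (z : List B) (k : ℕ) : wpow z (k+1) = z ++ wpow z k := by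
  simp [wpow, List.replicate_succ]

lemma wpow_one (z : List B) : wpow z 1 = z := by simp [wpow]

lemma wpow_add (z : List B) (a b : ℕ) : wpow z (a+b) = wpow z a ++ wpow z b := by
  induction a with
  | zero => simp [wpow_zero]
  | succ a ih => rw [Nat.succ_add, wpow_succ, wpow_succ, ih, List.append_assoc]

lemma wpow_length (z : List B) (k : ℕ) : (wpow z k).length = k * z.length := by
  simp [wpow, List.length_flatten, Nat.mul_comm]

lemma conj_pow (d t : List B) (e : ℕ) :
    wpow (d ++ t) (e+1) = d ++ wpow (t ++ d) e ++ t := by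
  induction e with
  | zero => simp [wpow_one, wpow_zero]
  | succ e ih =>
      rw [wpow_succ, ih, wpow_succ (t ++ d)]
      simp [List.append_assoc]

lemma rot_pow (z : List B) (e j : ℕ) (hj : j ≤ e * z.length) :
    (wpow z e).drop j ++ (wpow z e).take j
      = wpow (z.drop (j % z.length) ++ z.take (j % z.length)) e := by
  rcases eq_or_ne z [] with rfl | hz
  · simp at hj
    subst hj
    simp [wpow]
  · have hc : 0 < z.length := List.length_pos_iff.mpr hz
    set c := z.length with hcdef
    set b := j % c with hb
    set a := j / c with ha
    have hab : a * c + b = j := by rw [ha, hb, Nat.mul_comm]; exact Nat.div_add_mod j c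
    have hblt : b < c := Nat.mod_lt _ hc
    clear_value a b
    rcases Nat.lt_or_ge a e with hae | hae
    · -- a < e
      have h3 : a + (1 + (e - a - 1)) = e := by omega
      have hsplit : wpow z e = wpow z a ++ (z ++ wpow z (e - a - 1)) := by
        calc wpow z e = wpow z (a + (1 + (e - a - 1))) := by rw [h3]
          _ = wpow z a ++ (wpow z 1 ++ wpow z (e - a - 1)) := by rw [wpow_add, wpow_add]
          _ = wpow z a ++ (z ++ wpow z (e - a - 1)) := by rw [wpow_one]
      have hlen : (wpow z a).length = a * c := wpow_length z a
      have htake : (wpow z e).take j = wpow z a ++ (z.take b) := by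
        rw [hsplit, ← hab, ← hlen, List.take_length_add_append,
          List.take_append_of_le_length (le_of_lt hblt)]
      have hdrop : (wpow z e).drop j = z.drop b ++ wpow z (e - a - 1) := by
        rw [hsplit, ← hab, ← hlen, List.drop_length_add_append,
          List.drop_append_of_le_length (le_of_lt hblt)]
      have he1 : e = e - 1 + 1 := by omega
      have hRHS : wpow (z.drop b ++ z.take b) e = z.drop b ++ wpow z (e - 1) ++ z.take b := by
        conv_lhs => rw [he1]
        rw [conj_pow, List.take_append_drop]
      have hsum : wpow z (e - a - 1) ++ wpow z a = wpow z (e - 1) := by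
        rw [← wpow_add]; congr 1; omega
      rw [htake, hdrop, hRHS, ← hsum]
      simp [List.append_assoc]
    · -- a ≥ e : j = e * c, b = 0
      have hj' : j = e * c := by
        have h1 : a * c ≤ j := by omega
        have h2 : e * c ≤ a * c := Nat.mul_le_mul_right c hae
        omega
      have hb0 : b = 0 := by
        rw [hb, hj', Nat.mul_mod_left]
      rw [hb0]
      simp only [List.drop_zero, List.take_zero, List.append_nil]
      rw [hj', ← wpow_length z e]
      simp

lemma getD_wpow (z : List B) (b0 : B) :
    ∀ (k i : ℕ), i < k * z.length → (wpow z k).getD i b0 = z.getD (i % z.length) b0 := by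
  intro k
  induction k with
  | zero => intro i hi; simp at hi
  | succ k ih =>
      intro i hi
      rw [wpow_succ]
      rcases Nat.lt_or_ge i z.length with h | h
      · rw [List.getD_append _ _ _ _ h, Nat.mod_eq_of_lt h]
      · rw [List.getD_append_right _ _ _ _ h]
        have hi' : i < k * z.length + z.length := by rw [Nat.succ_mul] at hi; exact hi
        have hlt : i - z.length < k * z.length := by omega
        rw [ih _ hlt]
        congr 1
        have h2 : i - z.length + z.length = i := by omega
        conv_rhs => rw [← h2]
        rw [Nat.add_mod_right]

lemma periodic_ext (F : ℕ → B) (c : ℕ) (h : ∀ i, F (i + c) = F i) :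
    ∀ (n i : ℕ), F (i + n * c) = F i := by
  intro n
  induction n with
  | zero => simp
  | succ n ih =>
      intro i
      rw [Nat.succ_mul, ← Nat.add_assoc, h, ih]

lemma nat_bezout (p q : ℕ) (hp : 0 < p) (hq : 0 < q) :
    ∃ x y : ℕ, x * p = Nat.gcd p q + y * q := by
  have hg := Nat.gcd_eq_gcd_ab p q
  set a := Nat.gcdA p q with hadef
  set b := Nat.gcdB p q with hbdef
  set n : ℤ := |a| + |b| + 1 with hndef
  have hq1 : (1:ℤ) ≤ (q:ℤ) := by exact_mod_cast hq
  have hp1 : (1:ℤ) ≤ (p:ℤ) := by exact_mod_cast hp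
  have habs_a := abs_nonneg a
  have habs_b := abs_nonneg b
  have hna := neg_abs_le a
  have hnb := le_abs_self b
  have hx : (0:ℤ) ≤ a + n * q := by nlinarith
  have hy : (0:ℤ) ≤ n * p - b := by nlinarith
  refine ⟨(a + n * ↑q).toNat, (n * ↑p - b).toNat, ?_⟩
  have key : (a + n * q) * p = Nat.gcd p q + (n * p - b) * q := by
    rw [hg]; ring
  zify
  rw [Int.toNat_of_nonneg hx, Int.toNat_of_nonneg hy, key]

lemma mapF_pow (F : ℕ → B) (c : ℕ) (h : ∀ i, F (i + c) = F i) :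
    ∀ e : ℕ, (List.range (e * c)).map F = wpow ((List.range c).map F) e := by
  intro e
  induction e with
  | zero => simp [wpow_zero]
  | succ e ih =>
      have h1 : (e + 1) * c = c + e * c := by ring
      rw [h1, List.range_add, List.map_append, wpow_succ, List.map_map]
      congr 1
      rw [← ih]
      apply List.map_congr_left
      intro i _
      simp only [Function.comp_apply]
      rw [Nat.add_comm c i, h i]

lemma eq_rangeMap (z : List B) (b0 : B) (F : ℕ → B)
    (hF : ∀ i, i < z.length → F i = z.getD i b0) :
    z = (List.range z.length).map F := by
  apply List.ext_getElem
  · simp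
  · intro i h1 h2
    simp only [List.getElem_map, List.getElem_range]
    rw [hF i h1, List.getD_eq_getElem z b0 h1]

lemma extM_cons (Ψ : A → List B) (a : A) (x : List A) :
    extM Ψ (a :: x) = Ψ a ++ extM Ψ x := by simp [extM]

lemma extM_append (Ψ : A → List B) (x y : List A) :
    extM Ψ (x ++ y) = extM Ψ x ++ extM Ψ y := by simp [extM]

lemma extM_infix (Ψ : A → List B) {x y : List A} (h : x <:+: y) :
    extM Ψ x <:+: extM Ψ y := by
  obtain ⟨s, t, rfl⟩ := h
  exact ⟨extM Ψ s, extM Ψ t, by simp [extM_append]⟩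

lemma extM_length_le (Ψ : A → List B) (C : ℕ) (hC : ∀ a, (Ψ a).length ≤ C) :
    ∀ x : List A, (extM Ψ x).length ≤ C * x.length := by
  intro x
  induction x with
  | nil => simp [extM]
  | cons a x ih =>
      rw [extM_cons, List.length_append, List.length_cons, Nat.mul_succ]
      have := hC a
      omega

lemma langD0L_factorial {φ : A → List A} {w : List A} {x y : List A}
    (hx : x ∈ LangD0L φ w) (hyx : y <:+: x) : y ∈ LangD0L φ w := by
  obtain ⟨n, hn⟩ := hx
  exact ⟨n, hyx.trans hn⟩

/-- prefix decomposition along letter images -/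
lemma decPre (Ψ : A → List B) (C : ℕ) (hC : ∀ a, (Ψ a).length ≤ C) :
    ∀ (y : List A) (s R : List B), extM Ψ y = s ++ R →
      ∃ (y2 y3 : List A) (s3 : List B),
        y = y2 ++ y3 ∧ s = extM Ψ y2 ++ s3 ∧ s3.length ≤ C := by
  intro y
  induction y with
  | nil =>
      intro s R h
      simp only [extM] at h
      have hs : s = [] := by
        have := congrArg List.length h
        simp at this
        exact List.eq_nil_of_length_eq_zero (by omega)
      exact ⟨[], [], [], by simp, by simp [hs, extM], by simp⟩
  | cons a y ih =>
      intro s R h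
      rw [extM_cons] at h
      rcases le_or_gt s.length (Ψ a).length with hle | hgt
      · exact ⟨[], a :: y, s, by simp, by simp [extM], le_trans hle (hC a)⟩
      · have hpre : Ψ a <+: s := by
          apply List.prefix_of_prefix_length_le (l₃ := Ψ a ++ extM Ψ y)
          · exact List.prefix_append _ _
          · rw [h]; exact List.prefix_append _ _
          · omega
        obtain ⟨s', rfl⟩ := hpre
        rw [List.append_assoc] at h
        have h' : extM Ψ y = s' ++ R := List.append_cancel_left h
        obtain ⟨y2, y3, s3, hy, hs, hlen⟩ := ih s' R h'
        exact ⟨a :: y2, y3, s3, by simp [hy], by rw [extM_cons, List.append_assoc, ← hs], hlen⟩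

/-- infix decomposition along letter images -/
lemma dec (Ψ : A → List B) (C : ℕ) (hC : ∀ a, (Ψ a).length ≤ C) :
    ∀ (y : List A) (L s R : List B), extM Ψ y = L ++ s ++ R →
      ∃ (y1 y2 y3 : List A) (s1 s3 : List B),
        y = y1 ++ y2 ++ y3 ∧ s = s1 ++ extM Ψ y2 ++ s3 ∧ s1.length ≤ C ∧ s3.length ≤ C := by
  intro y
  induction y with
  | nil =>
      intro L s R h
      simp only [extM] at h
      have hs : s = [] := by
        have := congrArg List.length h
        simp at this
        exact List.eq_nil_of_length_eq_zero (by omega)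
      exact ⟨[], [], [], [], [], by simp, by simp [hs, extM], by simp, by simp⟩
  | cons a y ih =>
      intro L s R h
      rw [extM_cons] at h
      rcases le_or_gt (Ψ a).length L.length with hle | hgt
      · -- Ψ a is a prefix of L
        have hpre : Ψ a <+: L := by
          apply List.prefix_of_prefix_length_le (l₃ := Ψ a ++ extM Ψ y)
          · exact List.prefix_append _ _
          · rw [h, List.append_assoc]; exact List.prefix_append _ _
          · exact hle
        obtain ⟨L', rfl⟩ := hpre
        rw [List.append_assoc, List.append_assoc] at h
        have h' : extM Ψ y = L' ++ (s ++ R) := List.append_cancel_left h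
        rw [← List.append_assoc] at h'
        obtain ⟨y1, y2, y3, s1, s3, hy, hs, h1, h3⟩ := ih L' s R h'
        exact ⟨a :: y1, y2, y3, s1, s3, by simp [hy], hs, h1, h3⟩
      · -- L is a proper prefix of Ψ a
        have hpre : L <+: Ψ a := by
          apply List.prefix_of_prefix_length_le (l₃ := Ψ a ++ extM Ψ y)
          · rw [h, List.append_assoc]; exact List.prefix_append _ _
          · exact List.prefix_append _ _
          · omega
        obtain ⟨t, ht⟩ := hpre
        rw [← ht, List.append_assoc, List.append_assoc] at h
        have h' : t ++ extM Ψ y = s ++ R := List.append_cancel_left h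
        rcases le_or_gt s.length t.length with hst | hst
        · -- s inside t
          have h2 : t.length ≤ (Ψ a).length := by rw [← ht]; simp
          have h3 : s.length ≤ C := by have := hC a; omega
          exact ⟨[a], [], y, s, [], by simp, by simp [extM], h3, by simp⟩
        · have hts : t <+: s := by
            apply List.prefix_of_prefix_length_le (l₃ := s ++ R)
            · rw [← h']; exact List.prefix_append _ _
            · exact List.prefix_append _ _
            · omega
          obtain ⟨s', rfl⟩ := hts
          rw [List.append_assoc] at h'
          have h'' : extM Ψ y = s' ++ R := List.append_cancel_left h'
          obtain ⟨y2, y3, s3, hy, hs, hlen⟩ := decPre Ψ C hC y s' R h''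
          refine ⟨[a], y2, y3, t, s3, by simp [hy], by rw [hs, List.append_assoc], ?_, hlen⟩
          have h2 : t.length ≤ (Ψ a).length := by rw [← ht]; simp
          exact le_trans h2 (hC a)

/-- Every element of `L_H` occurs in some power `u^k`. -/
lemma occ {A B : Type*} [Fintype A] (φ : A → List A) (w : List A) (Ψ : A → List B)
    (hUR : UnifRec (LangD0L φ w)) (u : List B) (hu0 : u ≠ [])
    (huk : ∀ k : ℕ, wpow u k ∈ LangHD0L φ w Ψ)
    (s : List B) (hs : s ∈ LangHD0L φ w Ψ) :
    ∃ k : ℕ, s <:+: wpow u k := by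
  classical
  obtain ⟨C, hC, hC0⟩ : ∃ C : ℕ, (∀ a, (Ψ a).length ≤ C) ∧ 0 < C :=
    ⟨(Finset.univ.sup fun a : A => (Ψ a).length) + 1,
      fun a => le_trans (Finset.le_sup (f := fun a : A => (Ψ a).length) (Finset.mem_univ a))
        (Nat.le_succ _), Nat.succ_pos _⟩
  obtain ⟨x, hxΓ, hsx⟩ := hs
  obtain ⟨K, hK⟩ := hUR x.length
  set k : ℕ := C * (K + 2) + 1 with hkdef
  obtain ⟨y, hyΓ, hky⟩ := huk k
  obtain ⟨L, R, hLR⟩ := hky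
  obtain ⟨y1, y2, y3, s1, s3, hy, hsplit, h1, h3⟩ := dec Ψ C hC y L (wpow u k) R hLR.symm
  have hu1 : 1 ≤ u.length := List.length_pos_iff.mpr hu0
  have hlen2 : (extM Ψ y2).length ≤ C * y2.length := extM_length_le Ψ C hC y2
  have hwk : (wpow u k).length = k * u.length := wpow_length u k
  have hKy2 : K ≤ y2.length := by
    have hgl := congrArg List.length hsplit
    simp only [List.length_append] at hgl
    have hk1 : k ≤ k * u.length := Nat.le_mul_of_pos_right k hu1
    have hlt : C * K < C * y2.length := by
      have hk2 : k = C * K + 2 * C + 1 := by rw [hkdef]; ring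
      omega
    exact le_of_lt (Nat.lt_of_mul_lt_mul_left hlt)
  have hy2Γ : y2 ∈ LangD0L φ w := langD0L_factorial hyΓ ⟨y1, y3, by rw [← hy]⟩
  set y'' : List A := y2.take K with hy''def
  have hy''Γ : y'' ∈ LangD0L φ w := langD0L_factorial hy2Γ (List.take_prefix K y2).isInfix
  have hy''len : y''.length = K := by
    rw [hy''def, List.length_take]
    omega
  have hxy : x <:+: y'' := hK y'' hy''Γ hy''len x hxΓ rfl
  refine ⟨k, ?_⟩
  have c1 : extM Ψ x <:+: extM Ψ y'' := extM_infix Ψ hxy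
  have c2 : extM Ψ y'' <:+: extM Ψ y2 := extM_infix Ψ (List.take_prefix K y2).isInfix
  have c3 : extM Ψ y2 <:+: wpow u k := ⟨s1, s3, by rw [← hsplit]⟩
  exact hsx.trans (c1.trans (c2.trans c3))

end Stmt2Aux

open Stmt2Aux

/-- If `L_G` is uniformly recurrent, then `L_H` contains at most one infinite
repetition up to conjugation. -/
theorem stmt2 {A B : Type*} [Fintype A] [Fintype B]
    (φ : A → List A) (w : List A) (Ψ : A → List B) (hφ : NonErasing φ)
    (hUR : UnifRec (LangD0L φ w))
    (u v : List B) (hu : Primitive u) (hv : Primitive v)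
    (huk : ∀ k : ℕ, wpow u k ∈ LangHD0L φ w Ψ)
    (hvk : ∀ k : ℕ, wpow v k ∈ LangHD0L φ w Ψ) :
    Conj u v := by
  classical
  have hu0 : u ≠ [] := hu.1
  have hv0 : v ≠ [] := hv.1
  have hp : 0 < u.length := List.length_pos_iff.mpr hu0
  have hq : 0 < v.length := List.length_pos_iff.mpr hv0
  obtain ⟨b0, -⟩ := List.exists_mem_of_ne_nil u hu0
  -- Step 1: every power of v occurs in a power of a fixed-rotation word
  have key : ∀ m : ℕ, ∃ r : Fin u.length, ∃ t : ℕ,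
      wpow v m <+: wpow (u.drop (r : ℕ) ++ u.take (r : ℕ)) t := by
    intro m
    obtain ⟨k, hk⟩ := occ φ w Ψ hUR u hu0 huk (wpow v m) (hvk m)
    obtain ⟨L, R, hLR⟩ := hk
    refine ⟨⟨L.length % u.length, Nat.mod_lt _ hp⟩, k, ?_⟩
    have hjle : L.length ≤ k * u.length := by
      have hl := congrArg List.length hLR
      simp only [List.length_append, wpow_length] at hl
      omega
    have hrot := rot_pow u k L.length hjle
    have hdrop : (wpow u k).drop L.length = wpow v m ++ R := by
      rw [← hLR, List.append_assoc, List.drop_left]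
    have p1 : wpow v m <+: (wpow u k).drop L.length := by
      rw [hdrop]; exact List.prefix_append _ _
    have p2 : (wpow u k).drop L.length <+:
        wpow (u.drop (L.length % u.length) ++ u.take (L.length % u.length)) k := by
      rw [← hrot]; exact List.prefix_append _ _
    exact p1.trans p2
  -- Step 2: pigeonhole — a single rotation works for arbitrarily large m
  let f : ℕ → Fin u.length := fun m => (key m).choose
  obtain ⟨r, hrinf⟩ := Finite.exists_infinite_fiber f
  have hinf : (f ⁻¹' {r}).Infinite := Set.infinite_coe_iff.mp hrinf
  set u' : List B := u.drop (r : ℕ) ++ u.take (r : ℕ) with hu'def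
  have hu'len : u'.length = u.length := by
    rw [hu'def, List.length_append, List.length_drop, List.length_take]
    have := r.isLt
    omega
  -- Step 3: the infinite periodic words coincide
  set F : ℕ → B := fun i => v.getD (i % v.length) b0 with hFdef
  have hFG : ∀ i : ℕ, F i = u'.getD (i % u.length) b0 := by
    intro i
    obtain ⟨m, hm, him⟩ := hinf.exists_gt i
    have hfm : (key m).choose = r := hm
    obtain ⟨t, hpre⟩ := (key m).choose_spec
    rw [hfm] at hpre
    obtain ⟨R, hR⟩ := hpre
    have hiq : i < m * v.length := lt_of_lt_of_le him (Nat.le_mul_of_pos_right m hq)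
    have hitp : i < t * u'.length := by
      have hl := congrArg List.length hR
      rw [List.length_append, wpow_length, wpow_length] at hl
      rw [hu'def]
      omega
    calc F i = (wpow v m).getD i b0 := (getD_wpow v b0 m i hiq).symm
      _ = (wpow u' t).getD i b0 := by
            rw [← hR, List.getD_append _ _ _ _ (by rw [wpow_length]; exact hiq)]
      _ = u'.getD (i % u'.length) b0 := getD_wpow u' b0 t i hitp
      _ = u'.getD (i % u.length) b0 := by rw [hu'len]
  have hFq : ∀ i, F (i + v.length) = F i := by
    intro i
    simp only [hFdef, Nat.add_mod_right]
  have hFp : ∀ i, F (i + u.length) = F i := by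
    intro i
    rw [hFG (i + u.length), hFG i, Nat.add_mod_right]
  -- Step 4: period gcd
  set g : ℕ := Nat.gcd u.length v.length with hgdef
  have hg : ∀ i, F (i + g) = F i := by
    intro i
    obtain ⟨x, y, hxy⟩ := nat_bezout u.length v.length hp hq
    have h1 : F (i + g + y * v.length) = F (i + g) := periodic_ext F _ hFq y _
    have h2 : i + g + y * v.length = i + x * u.length := by
      rw [hgdef]; omega
    have h3 : F (i + x * u.length) = F i := periodic_ext F _ hFp x _
    rw [← h1, h2, h3]
  have hgq : g ∣ v.length := Nat.gcd_dvd_right _ _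
  have hgp : g ∣ u.length := Nat.gcd_dvd_left _ _
  -- Step 5: primitivity of v forces g = |v|
  have hvF : v = (List.range v.length).map F :=
    eq_rangeMap v b0 F (fun i hi => by simp only [hFdef, Nat.mod_eq_of_lt hi])
  have hqg : (v.length / g) * g = v.length := Nat.div_mul_cancel hgq
  have hvz : v = wpow ((List.range g).map F) (v.length / g) := by
    have hmp := mapF_pow F g hg (v.length / g)
    rw [hqg] at hmp
    exact hvF.trans hmp
  have heq1 : v.length / g = 1 := hv.2 _ _ hvz
  have hgq' : g = v.length := by
    rw [heq1, Nat.one_mul] at hqg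
    exact hqg
  have hqp : v.length ∣ u.length := hgq' ▸ hgp
  -- Step 6: u' is a power of v
  have hu'F : u' = (List.range u.length).map F := by
    have h := eq_rangeMap u' b0 F (fun i hi => by
      rw [hFG i, Nat.mod_eq_of_lt (hu'len ▸ hi)])
    rwa [hu'len] at h
  have hpq : (u.length / v.length) * v.length = u.length := Nat.div_mul_cancel hqp
  have hu'v : u' = wpow v (u.length / v.length) := by
    have hmp := mapF_pow F v.length hFq (u.length / v.length)
    rw [hpq, ← hvF] at hmp
    exact hu'F.trans hmp
  -- Step 7: primitivity of u forces u' = v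
  set e : ℕ := u.length / v.length with hedef
  set j : ℕ := (u.drop (r : ℕ)).length with hjdef
  have hj : j ≤ e * v.length := by
    have h1 : j ≤ u.length := by rw [hjdef, List.length_drop]; omega
    rw [hpq]
    exact h1
  have hudecomp : u = (wpow v e).drop j ++ (wpow v e).take j := by
    rw [← hu'v, hu'def, hjdef, List.drop_left, List.take_left]
    exact (List.take_append_drop (r : ℕ) u).symm
  have hrotu := rot_pow v e j hj
  have heu : e = 1 := hu.2 _ e (hudecomp.trans hrotu)
  have hu'veq : u' = v := by rw [hu'v, heu, wpow_one]
  exact ⟨u.take (r : ℕ), u.drop (r : ℕ), (List.take_append_drop (r : ℕ) u).symm,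
    by rw [← hu'veq, hu'def]⟩
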